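/- Let (C, φ) be a multistate monotone system with component state space 𝔠 = S_1 × ... × S_n (each S_i = {0,...,m_i}), and let P_k = {x_1,...,x_s} be the set of minimal k-level path vectors. Then for all y ∈ 𝔠, the k-level structure function satisfies φ_k(y) = Σ_{x ∈ cl(P_k)} δ_k(x) · I(y ≥ x), where δ_k is the signed domination function of the poset cl(P_k). -/

import Mathlib

open Finset

/-- Closure of a finite set of vectors under (componentwise) join. -/
def cl {α : Type*} [SemilatticeSup α] [OrderBot α] (X : Finset α) : Set α :=
  {x | ∃ T : Finset α, T ⊆ X ∧ T.Nonempty ∧ T.sup id = x}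

/-- Closure as a finite set. -/
noncomputable def clF {α : Type*} [SemilatticeSup α] [OrderBot α] [DecidableEq α]
    (X : Finset α) : Finset α :=
  (X.powerset.filter (fun T => T.Nonempty)).image (fun T => T.sup id)

/-- Signed domination function: number of odd formations minus number of even formations. -/
noncomputable def sd {α : Type*} [SemilatticeSup α] [OrderBot α] [DecidableEq α]
    (X : Finset α) (x : α) : ℤ :=
  ∑ T ∈ X.powerset.filter (fun T => T.Nonempty ∧ T.sup id = x), (-1 : ℤ) ^ (T.card + 1)

/-- Pairwise incomparability of the elements of a finite set. -/
def Incomp {α : Type*} [Preorder α] (X : Finset α) : Prop :=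
  ∀ x ∈ X, ∀ y ∈ X, x ≠ y → ¬ x ≤ y ∧ ¬ y ≤ x

open scoped Classical in
theorem stmt_2 {n : ℕ} {m : Fin n → ℕ}
    (φ : (∀ i : Fin n, Fin (m i + 1)) → ℕ) (hφ : Monotone φ) (k : ℕ) (hk : 1 ≤ k)
    (Pk : Finset (∀ i : Fin n, Fin (m i + 1)))
    (hPk : Pk = Finset.univ.filter (fun x => k ≤ φ x ∧ ∀ z, z < x → φ z < k)) :
    ∀ y : ∀ i : Fin n, Fin (m i + 1),
      (if k ≤ φ y then (1 : ℤ) else 0) =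
        ∑ x ∈ clF Pk, sd Pk x * (if x ≤ y then 1 else 0) := by
  intro y
  classical
  set S : Finset (∀ i : Fin n, Fin (m i + 1)) := Pk.filter (fun x => x ≤ y) with hSdef
  -- LHS characterization
  have hiff : k ≤ φ y ↔ S.Nonempty := by
    constructor
    · intro hy
      have hne : (Finset.univ.filter (fun z => z ≤ y ∧ k ≤ φ z)).Nonempty :=
        ⟨y, by simp [hy]⟩
      obtain ⟨w, hw, hmin⟩ := Finset.exists_minimal hne
      simp only [Finset.mem_filter, Finset.mem_univ, true_and] at hw
      refine ⟨w, ?_⟩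
      simp only [hSdef, Finset.mem_filter, hPk, Finset.mem_univ, true_and]
      refine ⟨⟨hw.2, fun z hz => ?_⟩, hw.1⟩
      by_contra hzk
      push_neg at hzk
      exact absurd (hmin (by simp [le_trans hz.le hw.1, hzk]) hz.le) (not_le_of_gt hz)
    · rintro ⟨x, hx⟩
      simp only [hSdef, Finset.mem_filter, hPk, Finset.mem_univ, true_and] at hx
      exact le_trans hx.1.1 (hφ hx.2)
  -- RHS: ungroup the fibers
  have hfib : ∀ x ∈ clF Pk, sd Pk x * (if x ≤ y then 1 else 0) =
      ∑ T ∈ (Pk.powerset.filter (fun T => T.Nonempty)).filter (fun T => T.sup id = x),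
        (-1 : ℤ) ^ (T.card + 1) * (if T.sup id ≤ y then 1 else 0) := by
    intro x hx
    rw [Finset.filter_filter, sd, Finset.sum_mul]
    refine Finset.sum_congr rfl fun T hT => ?_
    simp only [Finset.mem_filter] at hT
    rw [hT.2.2]
  have h1 : ∑ x ∈ clF Pk, sd Pk x * (if x ≤ y then 1 else 0) =
      ∑ T ∈ Pk.powerset.filter (fun T => T.Nonempty),
        (-1 : ℤ) ^ (T.card + 1) * (if T.sup id ≤ y then 1 else 0) := by
    rw [Finset.sum_congr rfl hfib]
    exact Finset.sum_fiberwise_of_maps_to (fun T hT => Finset.mem_image.2 ⟨T, hT, rfl⟩) _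
  -- restrict to subsets of S
  have h2 : ∑ T ∈ Pk.powerset.filter (fun T => T.Nonempty),
        (-1 : ℤ) ^ (T.card + 1) * (if T.sup id ≤ y then 1 else 0) =
      ∑ T ∈ S.powerset.filter (fun T => T.Nonempty), (-1 : ℤ) ^ (T.card + 1) := by
    simp only [mul_ite, mul_one, mul_zero]
    rw [← Finset.sum_filter, Finset.filter_filter]
    apply Finset.sum_congr _ (fun _ _ => rfl)
    ext T
    simp only [Finset.mem_filter, Finset.mem_powerset, hSdef]
    constructor
    · rintro ⟨hTP, hne, hsup⟩
      exact ⟨fun t ht => Finset.mem_filter.2 ⟨hTP ht,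
        le_trans (Finset.le_sup (f := id) ht) hsup⟩, hne⟩
    · rintro ⟨hTS, hne⟩
      refine ⟨fun t ht => (Finset.mem_filter.1 (hTS ht)).1, hne,
        Finset.sup_le fun t ht => (Finset.mem_filter.1 (hTS ht)).2⟩
  -- evaluate the alternating sum
  have h3 : ∑ T ∈ S.powerset.filter (fun T => T.Nonempty), (-1 : ℤ) ^ (T.card + 1) =
      if S.Nonempty then 1 else 0 := by
    have hsplit : ∑ T ∈ S.powerset, (-1 : ℤ) ^ (T.card + 1) =
        ∑ T ∈ S.powerset.filter (fun T => T.Nonempty), (-1 : ℤ) ^ (T.card + 1) +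
        ∑ T ∈ S.powerset.filter (fun T => ¬ T.Nonempty), (-1 : ℤ) ^ (T.card + 1) :=
      (Finset.sum_filter_add_sum_filter_not _ _ _).symm
    have hempt : ∑ T ∈ S.powerset.filter (fun T => ¬ T.Nonempty), (-1 : ℤ) ^ (T.card + 1)
        = -1 := by
      have h4 : S.powerset.filter (fun T => ¬ T.Nonempty) = {∅} := by
        ext T
        simp only [Finset.mem_filter, Finset.mem_powerset,
          Finset.not_nonempty_iff_eq_empty, Finset.mem_singleton]
        exact ⟨fun h => h.2, fun h => ⟨h ▸ Finset.empty_subset _, h⟩⟩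
      rw [h4]
      simp
    have htot : ∑ T ∈ S.powerset, (-1 : ℤ) ^ (T.card + 1) =
        -(if S = ∅ then 1 else 0) := by
      rw [← Finset.sum_powerset_neg_one_pow_card, ← Finset.sum_neg_distrib]
      exact Finset.sum_congr rfl fun T _ => by ring
    have := hsplit.symm.trans htot
    rw [hempt] at this
    rcases S.eq_empty_or_nonempty with h | h
    · simp [h, Finset.not_nonempty_empty] at this ⊢
      linarith
    · simp [h, Finset.nonempty_iff_ne_empty.1 h] at this ⊢
      linarith
  rw [h1, h2, h3]
  by_cases h : k ≤ φ y
  · simp [h, hiff.1 h]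
  · have : ¬ S.Nonempty := fun hs => h (hiff.2 hs)
    simp [h, this]
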